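/- arXiv:0709.0885 — 2 statements merged into one kernel-verified Lean document; each statement's English description precedes it below -/
import Mathlib

section
/- For all even nonnegative integers x and y with x < y, one has S_{3,0}([4x, 4y)) = 3·S_{3,0}([x, y)). -/
/-- binary digit sum -/
def sigma2 (n : ℕ) : ℕ := (Nat.digits 2 n).sum

/-- `S m l x = Σ_{0 ≤ n < x, n ≡ l (mod m)} (−1)^{σ(n)}` -/
def S (m l x : ℕ) : ℤ :=
  ∑ n ∈ (Finset.range x).filter (fun n => n % m = l), (-1 : ℤ) ^ sigma2 n

/-- `Sint m l x y = S_{m,l}([x,y)) = S_{m,l}(y) − S_{m,l}(x)` -/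
def Sint (m l x y : ℕ) : ℤ := S m l y - S m l x

lemma sigma2_rec (n : ℕ) (h : n ≠ 0) : sigma2 n = n % 2 + sigma2 (n / 2) := by
  unfold sigma2
  rw [Nat.digits_def' (by norm_num) (Nat.pos_of_ne_zero h)]
  simp [Nat.add_comm]

lemma sigma2_four (x r : ℕ) (hr : r < 4) : sigma2 (4 * x + r) = sigma2 x + sigma2 r := by
  rcases Nat.eq_zero_or_pos x with rfl | hx
  · interval_cases r <;> simp [sigma2]
  · have h1 : 4 * x + r ≠ 0 := by omega
    rw [sigma2_rec _ h1]
    have h2 : (4 * x + r) / 2 = 2 * x + r / 2 := by omega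
    have h3 : 2 * x + r / 2 ≠ 0 := by omega
    rw [h2, sigma2_rec _ h3]
    have h4 : (2 * x + r / 2) / 2 = x := by omega
    rw [h4]
    interval_cases r <;> simp [sigma2] <;> omega

lemma sigma2_succ_even (x : ℕ) (hx : Even x) : sigma2 (x + 1) = sigma2 x + 1 := by
  rcases Nat.eq_zero_or_pos x with rfl | hxp
  · simp [sigma2]
  · rw [sigma2_rec (x + 1) (by omega), sigma2_rec x (by omega)]
    obtain ⟨m, rfl⟩ := hx
    have h : (m + m + 1) / 2 = (m + m) / 2 := by omega
    rw [h]; omega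
    
lemma S_succ (m l n : ℕ) :
    S m l (n + 1) = S m l n + if n % m = l then (-1 : ℤ) ^ sigma2 n else 0 := by
  unfold S
  rw [Finset.range_add_one, Finset.filter_insert]
  split <;> simp [Finset.sum_insert, Finset.mem_filter, add_comm]


lemma sigma2_c0 : sigma2 0 = 0 := by simp [sigma2]
lemma sigma2_c1 : sigma2 1 = 1 := by simp [sigma2]
lemma sigma2_c2 : sigma2 2 = 1 := by simp [sigma2]
lemma sigma2_c3 : sigma2 3 = 2 := by simp [sigma2]

lemma S3_step (x : ℕ) (hx : Even x) :
    S 3 0 (4 * x + 8) - S 3 0 (4 * x) = 3 * (S 3 0 (x + 2) - S 3 0 x) := by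
  have e1 : sigma2 (x + 1) = sigma2 x + 1 := sigma2_succ_even x hx
  have s0 : sigma2 (4 * x) = sigma2 x := by
    have := sigma2_four x 0 (by norm_num)
    rw [sigma2_c0, Nat.add_zero, Nat.add_zero] at this; exact this
  have s1 : sigma2 (4 * x + 1) = sigma2 x + 1 := by
    have := sigma2_four x 1 (by norm_num); rw [sigma2_c1] at this; omega
  have s2 : sigma2 (4 * x + 2) = sigma2 x + 1 := by
    have := sigma2_four x 2 (by norm_num); rw [sigma2_c2] at this; omega
  have s3 : sigma2 (4 * x + 3) = sigma2 x + 2 := by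
    have := sigma2_four x 3 (by norm_num); rw [sigma2_c3] at this; omega
  have s4 : sigma2 (4 * x + 4) = sigma2 x + 1 := by
    rw [show 4 * x + 4 = 4 * (x + 1) + 0 by ring]
    have := sigma2_four (x + 1) 0 (by norm_num); rw [sigma2_c0] at this; omega
  have s5 : sigma2 (4 * x + 5) = sigma2 x + 2 := by
    rw [show 4 * x + 5 = 4 * (x + 1) + 1 by ring]
    have := sigma2_four (x + 1) 1 (by norm_num); rw [sigma2_c1] at this; omega
  have s6 : sigma2 (4 * x + 6) = sigma2 x + 2 := by
    rw [show 4 * x + 6 = 4 * (x + 1) + 2 by ring]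
    have := sigma2_four (x + 1) 2 (by norm_num); rw [sigma2_c2] at this; omega
  have s7 : sigma2 (4 * x + 7) = sigma2 x + 3 := by
    rw [show 4 * x + 7 = 4 * (x + 1) + 3 by ring]
    have := sigma2_four (x + 1) 3 (by norm_num); rw [sigma2_c3] at this; omega
  have h8 : S 3 0 (4 * x + 8) = S 3 0 (4 * x + 7) +
      (if (4 * x + 7) % 3 = 0 then (-1 : ℤ) ^ sigma2 (4 * x + 7) else 0) := by
    have := S_succ 3 0 (4 * x + 7); rwa [show 4 * x + 7 + 1 = 4 * x + 8 by ring] at this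
  have h7 : S 3 0 (4 * x + 7) = S 3 0 (4 * x + 6) +
      (if (4 * x + 6) % 3 = 0 then (-1 : ℤ) ^ sigma2 (4 * x + 6) else 0) := by
    have := S_succ 3 0 (4 * x + 6); rwa [show 4 * x + 6 + 1 = 4 * x + 7 by ring] at this
  have h6 : S 3 0 (4 * x + 6) = S 3 0 (4 * x + 5) +
      (if (4 * x + 5) % 3 = 0 then (-1 : ℤ) ^ sigma2 (4 * x + 5) else 0) := by
    have := S_succ 3 0 (4 * x + 5); rwa [show 4 * x + 5 + 1 = 4 * x + 6 by ring] at this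
  have h5 : S 3 0 (4 * x + 5) = S 3 0 (4 * x + 4) +
      (if (4 * x + 4) % 3 = 0 then (-1 : ℤ) ^ sigma2 (4 * x + 4) else 0) := by
    have := S_succ 3 0 (4 * x + 4); rwa [show 4 * x + 4 + 1 = 4 * x + 5 by ring] at this
  have h4 : S 3 0 (4 * x + 4) = S 3 0 (4 * x + 3) +
      (if (4 * x + 3) % 3 = 0 then (-1 : ℤ) ^ sigma2 (4 * x + 3) else 0) := by
    have := S_succ 3 0 (4 * x + 3); rwa [show 4 * x + 3 + 1 = 4 * x + 4 by ring] at this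
  have h3 : S 3 0 (4 * x + 3) = S 3 0 (4 * x + 2) +
      (if (4 * x + 2) % 3 = 0 then (-1 : ℤ) ^ sigma2 (4 * x + 2) else 0) := by
    have := S_succ 3 0 (4 * x + 2); rwa [show 4 * x + 2 + 1 = 4 * x + 3 by ring] at this
  have h2 : S 3 0 (4 * x + 2) = S 3 0 (4 * x + 1) +
      (if (4 * x + 1) % 3 = 0 then (-1 : ℤ) ^ sigma2 (4 * x + 1) else 0) := by
    have := S_succ 3 0 (4 * x + 1); rwa [show 4 * x + 1 + 1 = 4 * x + 2 by ring] at this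
  have h1 : S 3 0 (4 * x + 1) = S 3 0 (4 * x) +
      (if (4 * x) % 3 = 0 then (-1 : ℤ) ^ sigma2 (4 * x) else 0) := S_succ 3 0 (4 * x)
  have g2 : S 3 0 (x + 2) = S 3 0 (x + 1) +
      (if (x + 1) % 3 = 0 then (-1 : ℤ) ^ sigma2 (x + 1) else 0) := by
    have := S_succ 3 0 (x + 1); rwa [show x + 1 + 1 = x + 2 by ring] at this
  have g1 : S 3 0 (x + 1) = S 3 0 x +
      (if x % 3 = 0 then (-1 : ℤ) ^ sigma2 x else 0) := S_succ 3 0 x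
  rw [h8, h7, h6, h5, h4, h3, h2, h1, g2, g1, s0, s1, s2, s3, s4, s5, s6, s7, e1]
  have hm : x % 3 = 0 ∨ x % 3 = 1 ∨ x % 3 = 2 := by omega
  rcases hm with h | h | h
  · rw [if_pos (show (4 * x) % 3 = 0 by omega),
        if_neg (show ¬ (4 * x + 1) % 3 = 0 by omega),
        if_neg (show ¬ (4 * x + 2) % 3 = 0 by omega),
        if_pos (show (4 * x + 3) % 3 = 0 by omega),
        if_neg (show ¬ (4 * x + 4) % 3 = 0 by omega),
        if_neg (show ¬ (4 * x + 5) % 3 = 0 by omega),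
        if_pos (show (4 * x + 6) % 3 = 0 by omega),
        if_neg (show ¬ (4 * x + 7) % 3 = 0 by omega),
        if_pos h, if_neg (show ¬ (x + 1) % 3 = 0 by omega)]
    ring
  · rw [if_neg (show ¬ (4 * x) % 3 = 0 by omega),
        if_neg (show ¬ (4 * x + 1) % 3 = 0 by omega),
        if_pos (show (4 * x + 2) % 3 = 0 by omega),
        if_neg (show ¬ (4 * x + 3) % 3 = 0 by omega),
        if_neg (show ¬ (4 * x + 4) % 3 = 0 by omega),
        if_pos (show (4 * x + 5) % 3 = 0 by omega),
        if_neg (show ¬ (4 * x + 6) % 3 = 0 by omega),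
        if_neg (show ¬ (4 * x + 7) % 3 = 0 by omega),
        if_neg (show ¬ x % 3 = 0 by omega),
        if_neg (show ¬ (x + 1) % 3 = 0 by omega)]
    ring
  · rw [if_neg (show ¬ (4 * x) % 3 = 0 by omega),
        if_pos (show (4 * x + 1) % 3 = 0 by omega),
        if_neg (show ¬ (4 * x + 2) % 3 = 0 by omega),
        if_neg (show ¬ (4 * x + 3) % 3 = 0 by omega),
        if_pos (show (4 * x + 4) % 3 = 0 by omega),
        if_neg (show ¬ (4 * x + 5) % 3 = 0 by omega),
        if_neg (show ¬ (4 * x + 6) % 3 = 0 by omega),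
        if_pos (show (4 * x + 7) % 3 = 0 by omega),
        if_neg (show ¬ x % 3 = 0 by omega),
        if_pos (show (x + 1) % 3 = 0 by omega)]
    ring

lemma main_aux (x k : ℕ) (hx : Even x) :
    S 3 0 (4 * (x + 2 * k)) - S 3 0 (4 * x) = 3 * (S 3 0 (x + 2 * k) - S 3 0 x) := by
  induction k with
  | zero => simp
  | succ k ih =>
    have hx2 : Even (x + 2 * k) := by obtain ⟨m, rfl⟩ := hx; exact ⟨m + k, by ring⟩
    have hstep := S3_step (x + 2 * k) hx2
    rw [show 4 * (x + 2 * (k + 1)) = 4 * (x + 2 * k) + 8 by ring,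
        show x + 2 * (k + 1) = x + 2 * k + 2 by ring]
    linarith

theorem stmt_5 (x y : ℕ) (hx : Even x) (hy : Even y) (hxy : x < y) :
    Sint 3 0 (4 * x) (4 * y) = 3 * Sint 3 0 x y := by
  obtain ⟨k, rfl⟩ : ∃ k, y = x + 2 * k := by
    obtain ⟨a, rfl⟩ := hx; obtain ⟨b, rfl⟩ := hy; exact ⟨b - a, by omega⟩
  unfold Sint
  exact main_aux x k hx
end

section
/- Let y be a positive integer and m ≥ 1 an integer with 2^m dividing y, and let n be an integer with 2n > m. If t(y) ≡ 1 (mod 6) then S_{3,0}([y, y + 2^m)) = S_{3,0}([2^{2n}, 2^{2n} + 2^m)), and if t(y) ≡ 4 (mod 6) then S_{3,0}([y, y + 2^m)) = −S_{3,0}([2^{2n}, 2^{2n} + 2^m)). -/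
/-- `t y = Σ (−1)^{k}` over the exponents `k` in the binary expansion of `y` -/
def t (y : ℕ) : ℤ := ∑ i ∈ Finset.range y, if y.testBit i then (-1 : ℤ) ^ i else 0

lemma t_eq (y k : ℕ) (hk : y < 2 ^ k) :
    t y = ∑ i ∈ Finset.range k, if y.testBit i then (-1 : ℤ) ^ i else 0 := by
  set K := max y k with hK
  have e1 : (∑ i ∈ Finset.range y, if y.testBit i then (-1 : ℤ) ^ i else 0) =
      ∑ i ∈ Finset.range K, if y.testBit i then (-1 : ℤ) ^ i else 0 := by
    refine Finset.sum_subset (Finset.range_subset_range.2 (le_max_left _ _)) ?_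
    intro i hi hik
    have hik' : y ≤ i := by simpa using hik
    have : y < 2 ^ i := lt_of_lt_of_le ((Nat.lt_two_pow_self (n := y)))
      (Nat.pow_le_pow_right (by norm_num) hik')
    simp [Nat.testBit_lt_two_pow this]
  have e2 : (∑ i ∈ Finset.range k, if y.testBit i then (-1 : ℤ) ^ i else 0) =
      ∑ i ∈ Finset.range K, if y.testBit i then (-1 : ℤ) ^ i else 0 := by
    refine Finset.sum_subset (Finset.range_subset_range.2 (le_max_right _ _)) ?_
    intro i hi hik
    have hik' : k ≤ i := by simpa using hik
    have : y < 2 ^ i := lt_of_lt_of_le hk (Nat.pow_le_pow_right (by norm_num) hik')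
    simp [Nat.testBit_lt_two_pow this]
  rw [t, e1, e2]

lemma t_two_mul (q : ℕ) : t (2 * q) = -t q := by
  have h1 : 2 * q < 2 ^ (q + 1) := by
    have := Nat.lt_two_pow_self (n := q)
    rw [pow_succ]
    omega
  rw [t_eq (2 * q) (q + 1) h1, Finset.sum_range_succ']
  have hq2 : (2 * q) % 2 = 0 := by omega
  have h0 : (2 * q).testBit 0 = false := by
    rw [Nat.testBit_zero, hq2]
    decide
  rw [h0]
  simp only [Bool.false_eq_true, if_false, add_zero]
  have : ∀ i, (2 * q).testBit (i + 1) = q.testBit i := by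
    intro i
    simpa [Nat.testBit_succ] using congrArg (fun x => Nat.testBit x i) (Nat.mul_div_cancel_left q (by norm_num : 0 < 2))
  rw [show (∑ i ∈ Finset.range q, if (2*q).testBit (i+1) then (-1:ℤ)^(i+1) else 0)
      = ∑ i ∈ Finset.range q, -(if q.testBit i then (-1:ℤ)^i else 0) by
    refine Finset.sum_congr rfl fun i _ => ?_
    rw [this i]
    by_cases h : q.testBit i <;> simp [h, pow_succ]]
  rw [Finset.sum_neg_distrib]
  rfl

lemma t_two_mul_add_one (q : ℕ) : t (2 * q + 1) = 1 - t q := by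
  have h1 : 2 * q + 1 < 2 ^ (q + 1) := by
    have := Nat.lt_two_pow_self (n := q)
    rw [pow_succ]
    omega
  rw [t_eq (2 * q + 1) (q + 1) h1, Finset.sum_range_succ']
  have h0 : (2 * q + 1).testBit 0 = true := by
    rw [Nat.testBit_zero]
    simp [Nat.mul_add_mod]
  rw [h0]
  simp only [if_true, pow_zero]
  have : ∀ i, (2 * q + 1).testBit (i + 1) = q.testBit i := by
    intro i
    have : (2 * q + 1) / 2 = q := by omega
    simpa [Nat.testBit_succ, this]
  rw [show (∑ i ∈ Finset.range q, if (2*q+1).testBit (i+1) then (-1:ℤ)^(i+1) else 0)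
      = ∑ i ∈ Finset.range q, -(if q.testBit i then (-1:ℤ)^i else 0) by
    refine Finset.sum_congr rfl fun i _ => ?_
    rw [this i]
    by_cases h : q.testBit i <;> simp [h, pow_succ]]
  rw [Finset.sum_neg_distrib]
  show -t q + 1 = 1 - t q
  ring

lemma sigma2_two_mul (q : ℕ) : sigma2 (2 * q) = sigma2 q := by
  rcases Nat.eq_zero_or_pos q with rfl | hq
  · simp [sigma2]
  · unfold sigma2
    rw [Nat.digits_def' (by norm_num : 1 < 2) (by omega : 0 < 2 * q)]
    simp [Nat.mul_div_cancel_left q (by norm_num : 0 < 2), Nat.mul_mod_right]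

lemma sigma2_two_mul_add_one (q : ℕ) : sigma2 (2 * q + 1) = sigma2 q + 1 := by
  unfold sigma2
  rw [Nat.digits_def' (by norm_num : 1 < 2) (by omega : 0 < 2 * q + 1)]
  have h1 : (2 * q + 1) % 2 = 1 := by omega
  have h2 : (2 * q + 1) / 2 = q := by omega
  rw [h1, h2, List.sum_cons]
  omega

lemma t_mod (y : ℕ) : t y % 3 = (y : ℤ) % 3 ∧ t y % 2 = (sigma2 y : ℤ) % 2 := by
  induction y using Nat.strong_induction_on with
  | _ y ih =>
    rcases Nat.eq_zero_or_pos y with rfl | hy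
    · simp [t, sigma2]
    rcases Nat.even_or_odd y with ⟨q, hq⟩ | ⟨q, hq⟩
    · subst hq
      rw [show q + q = 2 * q by ring] at *
      have hlt : q < 2 * q := by omega
      obtain ⟨h3, h2⟩ := ih q hlt
      rw [t_two_mul, sigma2_two_mul]
      constructor
      · omega
      · omega
    · subst hq
      have hlt : q < 2 * q + 1 := by omega
      obtain ⟨h3, h2⟩ := ih q hlt
      rw [t_two_mul_add_one, sigma2_two_mul_add_one]
      constructor
      · push_cast
        omega
      · push_cast
        omega

lemma sigma2_two_pow (k : ℕ) : sigma2 (2 ^ k) = 1 := by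
  induction k with
  | zero => simp [sigma2]
  | succ k ih => rw [pow_succ, mul_comm, sigma2_two_mul, ih]

lemma sigma2_pow_mul (m c : ℕ) : sigma2 (2 ^ m * c) = sigma2 c := by
  induction m with
  | zero => simp
  | succ m ih =>
    rw [pow_succ, show 2 ^ m * 2 * c = 2 * (2 ^ m * c) by ring, sigma2_two_mul, ih]

lemma sigma2_add_pow_mul {m j c : ℕ} (hj : j < 2 ^ m) :
    sigma2 (j + 2 ^ m * c) = sigma2 j + sigma2 c := by
  rcases Nat.eq_zero_or_pos c with rfl | hc
  · simp [sigma2]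
  have hlen : (Nat.digits 2 j).length ≤ m := by
    rcases Nat.eq_zero_or_pos j with rfl | hjp
    · simp
    · rw [Nat.digits_len 2 j (by norm_num) (by omega)]
      have := Nat.log_lt_of_lt_pow (by omega : j ≠ 0) hj
      omega
  have key := Nat.digits_append_zeroes_append_digits (b := 2) (k := m - (Nat.digits 2 j).length)
    (m := c) (n := j) (by norm_num) hc
  rw [show (Nat.digits 2 j).length + (m - (Nat.digits 2 j).length) = m by omega] at key
  unfold sigma2
  rw [← key]
  simp [List.sum_append, List.sum_replicate]

lemma Sint_eq (y m : ℕ) (hdvd : 2 ^ m ∣ y) (hy3 : y % 3 = 1) :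
    Sint 3 0 y (y + 2 ^ m) = (-1 : ℤ) ^ sigma2 y *
      ∑ j ∈ Finset.range (2 ^ m), if (1 + j) % 3 = 0 then (-1 : ℤ) ^ sigma2 j else 0 := by
  obtain ⟨c, hc⟩ := hdvd
  unfold Sint S
  rw [Finset.sum_filter, Finset.sum_filter]
  rw [← Finset.sum_Ico_eq_sub (fun n => if n % 3 = 0 then (-1:ℤ)^sigma2 n else 0)
      (Nat.le_add_right y (2 ^ m))]
  rw [Finset.sum_Ico_eq_sum_range]
  rw [Nat.add_sub_cancel_left]
  rw [Finset.mul_sum]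
  refine Finset.sum_congr rfl fun j hj => ?_
  have hjlt : j < 2 ^ m := Finset.mem_range.1 hj
  have hmod : (y + j) % 3 = (1 + j) % 3 := by omega
  have hsig : sigma2 (y + j) = sigma2 y + sigma2 j := by
    have h1 := sigma2_add_pow_mul (c := c) hjlt
    have h2 := sigma2_pow_mul m c
    rw [hc, add_comm (2 ^ m * c) j, h1, h2]
    omega
  rw [hmod, hsig]
  by_cases h : (1 + j) % 3 = 0 <;> simp [h, pow_add]

theorem stmt_14 (y m n : ℕ) (hy : 0 < y) (hm : 1 ≤ m) (hdvd : 2 ^ m ∣ y)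
    (hn : m < 2 * n) :
    (t y % 6 = 1 →
      Sint 3 0 y (y + 2 ^ m) = Sint 3 0 (2 ^ (2 * n)) (2 ^ (2 * n) + 2 ^ m)) ∧
    (t y % 6 = 4 →
      Sint 3 0 y (y + 2 ^ m) = -Sint 3 0 (2 ^ (2 * n)) (2 ^ (2 * n) + 2 ^ m)) := by
  obtain ⟨ht3, ht2⟩ := t_mod y
  -- RHS setup
  have hdvd' : 2 ^ m ∣ 2 ^ (2 * n) := pow_dvd_pow 2 (by omega)
  have h4 : 2 ^ (2 * n) % 3 = 1 := by
    rw [pow_mul, Nat.pow_mod]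
    norm_num
  have hR := Sint_eq (2 ^ (2 * n)) m hdvd' h4
  rw [sigma2_two_pow] at hR
  constructor
  · intro ht
    have hy3 : y % 3 = 1 := by
      have : (y : ℤ) % 3 = 1 := by omega
      omega
    have hsodd : (sigma2 y : ℤ) % 2 = 1 := by omega
    have hsodd' : sigma2 y % 2 = 1 := by omega
    rw [Sint_eq y m hdvd hy3, hR, Odd.neg_one_pow ⟨sigma2 y / 2, by omega⟩, pow_one]
  · intro ht
    have hy3 : y % 3 = 1 := by
      have : (y : ℤ) % 3 = 1 := by omega
      omega
    have hseven : (sigma2 y : ℤ) % 2 = 0 := by omega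
    have hseven' : sigma2 y % 2 = 0 := by omega
    rw [Sint_eq y m hdvd hy3, hR, Even.neg_one_pow ⟨sigma2 y / 2, by omega⟩, pow_one]
    ring
end
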